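/- The pentagon P with vertices (−1,2), (1,2), (1,0), (−1,−1), (−2,−1) is an LDP-polygon, and its index (the least positive integer ℓ such that ℓP* is a lattice polygon) equals 10. -/

import Mathlib

open Pointwise

/-- The embedding `ℤ² → ℝ²`. -/
def i2r (v : ℤ × ℤ) : ℝ × ℝ := ((v.1 : ℝ), (v.2 : ℝ))

/-- The points of `ℝ × ℝ` with integer coordinates. -/
def latticePts : Set (ℝ × ℝ) := Set.range i2r

/-- The dual polygon `P* = {v | ⟨v,u⟩ ≥ -1 for all u ∈ P}`. -/
def dualPoly (P : Set (ℝ × ℝ)) : Set (ℝ × ℝ) :=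
  {v | ∀ u ∈ P, v.1 * u.1 + v.2 * u.2 ≥ -1}

/-- The pentagon's vertex set. -/
def PV : Set (ℝ × ℝ) :=
  {((-1 : ℝ), (2 : ℝ)), ((1 : ℝ), (2 : ℝ)), ((1 : ℝ), (0 : ℝ)),
    ((-1 : ℝ), (-1 : ℝ)), ((-2 : ℝ), (-1 : ℝ))}

/-- The dual pentagon's vertex set. -/
def QV : Set (ℝ × ℝ) :=
  {((3/5 : ℝ), (-1/5 : ℝ)), ((0 : ℝ), (1 : ℝ)), ((-1 : ℝ), (2 : ℝ)),
    ((-1 : ℝ), (0 : ℝ)), ((0 : ℝ), (-1/2 : ℝ))}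

lemma combo3 {s : Set (ℝ × ℝ)} (hs : Convex ℝ s) {p q r : ℝ × ℝ}
    (hp : p ∈ s) (hq : q ∈ s) (hr : r ∈ s) {a b c : ℝ}
    (ha : 0 ≤ a) (hb : 0 ≤ b) (hc : 0 ≤ c) (habc : a + b + c = 1) :
    a • p + b • q + c • r ∈ s := by
  rcases eq_or_lt_of_le (by linarith : (0:ℝ) ≤ b + c) with h | h
  · have hb0 : b = 0 := by linarith
    have hc0 : c = 0 := by linarith
    have ha1 : a = 1 := by linarith
    simpa [hb0, hc0, ha1] using hp
  · have hq' : (b/(b+c)) • q + (c/(b+c)) • r ∈ s :=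
      hs hq hr (div_nonneg hb h.le) (div_nonneg hc h.le)
        (by field_simp)
    have h2 : a • p + (b+c) • ((b/(b+c)) • q + (c/(b+c)) • r) ∈ s :=
      hs hp hq' ha h.le (by linarith)
    have key : (b+c) • ((b/(b+c)) • q + (c/(b+c)) • r) = b • q + c • r := by
      rw [smul_add, smul_smul, smul_smul]
      congr 2 <;> field_simp
    rw [key] at h2
    rwa [add_assoc]

lemma sector {S : Set (ℝ × ℝ)} (hS : Convex ℝ S) {p q : ℝ × ℝ}
    (hp : p ∈ S) (hq : q ∈ S) (hz : (0 : ℝ × ℝ) ∈ S) {v : ℝ × ℝ} {b c : ℝ}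
    (hb : 0 ≤ b) (hc : 0 ≤ c) (hbc : b + c ≤ 1) (hv : v = b • p + c • q) :
    v ∈ S := by
  have h := combo3 hS hp hq hz hb hc (by linarith : (0:ℝ) ≤ 1 - b - c) (by ring)
  rwa [smul_zero, add_zero, ← hv] at h

lemma halfplane_convex (A B C : ℝ) : Convex ℝ {u : ℝ × ℝ | A * u.1 + B * u.2 ≥ C} := by
  intro x hx y hy a b ha hb hab
  simp only [Set.mem_setOf_eq, Prod.fst_add, Prod.snd_add, Prod.smul_fst, Prod.smul_snd,
    smul_eq_mul] at *
  have key := add_le_add (mul_le_mul_of_nonneg_left hx ha) (mul_le_mul_of_nonneg_left hy hb)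
  have hC : a * C + b * C = C := by linear_combination C * hab
  nlinarith [key, hC]

lemma dual_convex (P : Set (ℝ × ℝ)) : Convex ℝ (dualPoly P) := by
  intro x hx y hy a b ha hb hab u hu
  have h1 := hx u hu
  have h2 := hy u hu
  show (a • x + b • y).1 * u.1 + (a • x + b • y).2 * u.2 ≥ -1
  simp only [Prod.fst_add, Prod.snd_add, Prod.smul_fst, Prod.smul_snd, smul_eq_mul]
  have key := add_le_add (mul_le_mul_of_nonneg_left h1 ha) (mul_le_mul_of_nonneg_left h2 hb)
  have hC : a * (-1 : ℝ) + b * (-1) = -1 := by linear_combination (-1 : ℝ) * hab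
  nlinarith [key, hC]

lemma zeroP : (0 : ℝ × ℝ) ∈ convexHull ℝ PV := by
  have h := combo3 (convex_convexHull ℝ PV)
    (subset_convexHull ℝ PV (show ((1:ℝ),(0:ℝ)) ∈ PV by norm_num [PV]))
    (subset_convexHull ℝ PV (show ((-1:ℝ),(-1:ℝ)) ∈ PV by norm_num [PV]))
    (subset_convexHull ℝ PV (show ((-1:ℝ),(2:ℝ)) ∈ PV by norm_num [PV]))
    (by norm_num : (0:ℝ) ≤ 1/2) (by norm_num : (0:ℝ) ≤ 1/3) (by norm_num : (0:ℝ) ≤ 1/6)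
    (by norm_num)
  have e : (0 : ℝ × ℝ) =
      (1/2 : ℝ) • ((1:ℝ),(0:ℝ)) + (1/3 : ℝ) • ((-1:ℝ),(-1:ℝ)) + (1/6 : ℝ) • ((-1:ℝ),(2:ℝ)) := by
    simp only [Prod.smul_mk, Prod.mk_add_mk, smul_eq_mul, Prod.ext_iff]
    constructor <;> norm_num
  rwa [← e] at h

lemma zeroQ : (0 : ℝ × ℝ) ∈ convexHull ℝ QV := by
  have h := combo3 (convex_convexHull ℝ QV)
    (subset_convexHull ℝ QV (show ((-1:ℝ),(0:ℝ)) ∈ QV by norm_num [QV]))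
    (subset_convexHull ℝ QV (show ((3/5:ℝ),(-1/5:ℝ)) ∈ QV by norm_num [QV]))
    (subset_convexHull ℝ QV (show ((0:ℝ),(1:ℝ)) ∈ QV by norm_num [QV]))
    (by norm_num : (0:ℝ) ≤ 1/3) (by norm_num : (0:ℝ) ≤ 5/9) (by norm_num : (0:ℝ) ≤ 1/9)
    (by norm_num)
  have e : (0 : ℝ × ℝ) =
      (1/3 : ℝ) • ((-1:ℝ),(0:ℝ)) + (5/9 : ℝ) • ((3/5:ℝ),(-1/5:ℝ)) + (1/9 : ℝ) • ((0:ℝ),(1:ℝ)) := by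
    simp only [Prod.smul_mk, Prod.mk_add_mk, smul_eq_mul, Prod.ext_iff]
    constructor <;> norm_num
  rwa [← e] at h

lemma P_ball {v : ℝ × ℝ} (h1 : |v.1| ≤ 1/4) (h2 : |v.2| ≤ 1/4) :
    v ∈ convexHull ℝ PV := by
  rw [abs_le] at h1 h2
  obtain ⟨h1l, h1r⟩ := h1
  obtain ⟨h2l, h2r⟩ := h2
  have cvx := convex_convexHull ℝ PV
  have m1 : ((1:ℝ),(0:ℝ)) ∈ convexHull ℝ PV := subset_convexHull ℝ PV (by norm_num [PV])
  have m2 : ((1:ℝ),(2:ℝ)) ∈ convexHull ℝ PV := subset_convexHull ℝ PV (by norm_num [PV])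
  have m3 : ((-1:ℝ),(2:ℝ)) ∈ convexHull ℝ PV := subset_convexHull ℝ PV (by norm_num [PV])
  have m4 : ((-2:ℝ),(-1:ℝ)) ∈ convexHull ℝ PV := subset_convexHull ℝ PV (by norm_num [PV])
  have m5 : ((-1:ℝ),(-1:ℝ)) ∈ convexHull ℝ PV := subset_convexHull ℝ PV (by norm_num [PV])
  rcases le_total 0 v.2 with hy | hy
  · rcases le_total (v.2 - 2*v.1) 0 with ht | ht
    · -- sector (p1, p2)
      exact sector cvx m1 m2 zeroP (b := (2*v.1 - v.2)/2) (c := v.2/2)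
        (by linarith) (by linarith) (by linarith)
        (by simp only [Prod.smul_mk, Prod.mk_add_mk, smul_eq_mul, Prod.ext_iff]; constructor <;> ring)
    · rcases le_total (-v.2 - 2*v.1) 0 with ht3 | ht3
      · -- sector (p2, p3)
        exact sector cvx m2 m3 zeroP (b := (2*v.1 + v.2)/4) (c := (v.2 - 2*v.1)/4)
          (by linarith) (by linarith) (by linarith)
          (by simp only [Prod.smul_mk, Prod.mk_add_mk, smul_eq_mul, Prod.ext_iff]; constructor <;> ring)
      · -- sector (p3, p4)
        exact sector cvx m3 m4 zeroP (b := (-v.1 + 2*v.2)/5) (c := (-2*v.1 - v.2)/5)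
          (by linarith) (by linarith) (by linarith)
          (by simp only [Prod.smul_mk, Prod.mk_add_mk, smul_eq_mul, Prod.ext_iff]; constructor <;> ring)
  · rcases le_total 0 (v.1 - v.2) with ht | ht
    · -- sector (p5, p1)
      exact sector cvx m5 m1 zeroP (b := -v.2) (c := v.1 - v.2)
        (by linarith) (by linarith) (by linarith)
        (by simp only [Prod.smul_mk, Prod.mk_add_mk, smul_eq_mul, Prod.ext_iff]; constructor <;> ring)
    · rcases le_total 0 (v.1 - 2*v.2) with ht4 | ht4
      · -- sector (p4, p5)
        exact sector cvx m4 m5 zeroP (b := -v.1 + v.2) (c := v.1 - 2*v.2)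
          (by linarith) (by linarith) (by linarith)
          (by simp only [Prod.smul_mk, Prod.mk_add_mk, smul_eq_mul, Prod.ext_iff]; constructor <;> ring)
      · -- sector (p3, p4)
        exact sector cvx m3 m4 zeroP (b := (-v.1 + 2*v.2)/5) (c := (-2*v.1 - v.2)/5)
          (by linarith) (by linarith) (by linarith)
          (by simp only [Prod.smul_mk, Prod.mk_add_mk, smul_eq_mul, Prod.ext_iff]; constructor <;> ring)

lemma mem_PV_hull {u : ℝ × ℝ} (hu : u ∈ PV) : u ∈ convexHull ℝ PV :=
  subset_convexHull ℝ PV hu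

lemma mem_dualP {w : ℝ × ℝ}
    (h1 : w.1 * (-1) + w.2 * 2 ≥ -1) (h2 : w.1 * 1 + w.2 * 2 ≥ -1)
    (h3 : w.1 * 1 + w.2 * 0 ≥ -1) (h4 : w.1 * (-1) + w.2 * (-1) ≥ -1)
    (h5 : w.1 * (-2) + w.2 * (-1) ≥ -1) :
    w ∈ dualPoly (convexHull ℝ PV) := by
  intro u hu
  have hsub : PV ⊆ {u : ℝ × ℝ | w.1 * u.1 + w.2 * u.2 ≥ -1} := by
    intro x hx
    simp only [PV, Set.mem_insert_iff, Set.mem_singleton_iff] at hx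
    rcases hx with rfl | rfl | rfl | rfl | rfl <;> (simp only [Set.mem_setOf_eq]; norm_num; linarith)
  exact convexHull_min hsub (halfplane_convex w.1 w.2 (-1)) hu

lemma Q_eq : dualPoly (convexHull ℝ PV) = convexHull ℝ QV := by
  apply Set.Subset.antisymm
  · intro v hv
    have hA := hv ((-1:ℝ),(2:ℝ)) (mem_PV_hull (by norm_num [PV]))
    have hB := hv ((1:ℝ),(2:ℝ)) (mem_PV_hull (by norm_num [PV]))
    have hC := hv ((1:ℝ),(0:ℝ)) (mem_PV_hull (by norm_num [PV]))
    have hD := hv ((-1:ℝ),(-1:ℝ)) (mem_PV_hull (by norm_num [PV]))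
    have hE := hv ((-2:ℝ),(-1:ℝ)) (mem_PV_hull (by norm_num [PV]))
    simp only at hA hB hC hD hE
    have cvx := convex_convexHull ℝ QV
    have m1 : ((3/5:ℝ),(-1/5:ℝ)) ∈ convexHull ℝ QV := subset_convexHull ℝ QV (by norm_num [QV])
    have m2 : ((0:ℝ),(1:ℝ)) ∈ convexHull ℝ QV := subset_convexHull ℝ QV (by norm_num [QV])
    have m3 : ((-1:ℝ),(2:ℝ)) ∈ convexHull ℝ QV := subset_convexHull ℝ QV (by norm_num [QV])
    have m4 : ((-1:ℝ),(0:ℝ)) ∈ convexHull ℝ QV := subset_convexHull ℝ QV (by norm_num [QV])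
    have m5 : ((0:ℝ),(-1/2:ℝ)) ∈ convexHull ℝ QV := subset_convexHull ℝ QV (by norm_num [QV])
    rcases le_total 0 v.1 with hx | hx
    · rcases le_total 0 (v.1 + 3*v.2) with h13 | h13
      · -- sector (q1, q2)
        exact sector cvx m1 m2 zeroQ (b := 5*v.1/3) (c := (v.1 + 3*v.2)/3)
          (by linarith) (by linarith) (by linarith)
          (by simp only [Prod.smul_mk, Prod.mk_add_mk, smul_eq_mul, Prod.ext_iff]; constructor <;> ring)
      · -- sector (q5, q1)
        exact sector cvx m5 m1 zeroQ (b := -2*(v.1 + 3*v.2)/3) (c := 5*v.1/3)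
          (by linarith) (by linarith) (by linarith)
          (by simp only [Prod.smul_mk, Prod.mk_add_mk, smul_eq_mul, Prod.ext_iff]; constructor <;> ring)
    · rcases le_total 0 (-2*v.1 - v.2) with h3 | h3
      · rcases le_total 0 v.2 with hy | hy
        · -- sector (q3, q4)
          exact sector cvx m3 m4 zeroQ (b := v.2/2) (c := (-2*v.1 - v.2)/2)
            (by linarith) (by linarith) (by linarith)
            (by simp only [Prod.smul_mk, Prod.mk_add_mk, smul_eq_mul, Prod.ext_iff]; constructor <;> ring)
        · -- sector (q4, q5)
          exact sector cvx m4 m5 zeroQ (b := -v.1) (c := -2*v.2)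
            (by linarith) (by linarith) (by linarith)
            (by simp only [Prod.smul_mk, Prod.mk_add_mk, smul_eq_mul, Prod.ext_iff]; constructor <;> ring)
      · -- sector (q2, q3)
        exact sector cvx m2 m3 zeroQ (b := 2*v.1 + v.2) (c := -v.1)
          (by linarith) (by linarith) (by linarith)
          (by simp only [Prod.smul_mk, Prod.mk_add_mk, smul_eq_mul, Prod.ext_iff]; constructor <;> ring)
  · apply convexHull_min _ (dual_convex _)
    intro w hw
    simp only [QV, Set.mem_insert_iff, Set.mem_singleton_iff] at hw
    rcases hw with rfl | rfl | rfl | rfl | rfl <;>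
      · apply mem_dualP <;> norm_num

lemma extreme_of_tight {S : Set (ℝ × ℝ)} {x : ℝ × ℝ} (hx : x ∈ S)
    {A1 B1 r1 A2 B2 r2 : ℝ}
    (h1 : ∀ y ∈ S, A1 * y.1 + B1 * y.2 ≥ r1) (h2 : ∀ y ∈ S, A2 * y.1 + B2 * y.2 ≥ r2)
    (e1 : A1 * x.1 + B1 * x.2 = r1) (e2 : A2 * x.1 + B2 * x.2 = r2)
    (hdet : A1 * B2 - A2 * B1 ≠ 0) :
    x ∈ Set.extremePoints ℝ S := by
  refine ⟨hx, ?_⟩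
  rintro x1 hx1 x2 hx2 ⟨a, b, ha, hb, hab, hsum⟩
  have f11 := h1 x1 hx1
  have f12 := h1 x2 hx2
  have f21 := h2 x1 hx1
  have f22 := h2 x2 hx2
  have hc1 : a * x1.1 + b * x2.1 = x.1 := by
    rw [← hsum]; simp [Prod.fst_add, Prod.smul_fst, smul_eq_mul]
  have hc2 : a * x1.2 + b * x2.2 = x.2 := by
    rw [← hsum]; simp [Prod.snd_add, Prod.smul_snd, smul_eq_mul]
  have tight : ∀ (A B r : ℝ), A * x1.1 + B * x1.2 ≥ r → A * x2.1 + B * x2.2 ≥ r →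
      A * x.1 + B * x.2 = r → (A * x1.1 + B * x1.2 = r ∧ A * x2.1 + B * x2.2 = r) := by
    intro A B r g1 g2 ge
    have hl : a * (A * x1.1 + B * x1.2) + b * (A * x2.1 + B * x2.2) = r := by
      linear_combination A * hc1 + B * hc2 + ge
    constructor
    · by_contra hne
      have hgt : r < A * x1.1 + B * x1.2 := lt_of_le_of_ne g1 (fun h => hne h.symm)
      have hlt := mul_lt_mul_of_pos_left hgt ha
      have hle := mul_le_mul_of_nonneg_left g2 hb.le
      have hC : a * r + b * r = r := by linear_combination r * hab
      linarith
    · by_contra hne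
      have hgt : r < A * x2.1 + B * x2.2 := lt_of_le_of_ne g2 (fun h => hne h.symm)
      have hlt := mul_lt_mul_of_pos_left hgt hb
      have hle := mul_le_mul_of_nonneg_left g1 ha.le
      have hC : a * r + b * r = r := by linear_combination r * hab
      linarith
  obtain ⟨t11, t12⟩ := tight A1 B1 r1 f11 f12 e1
  obtain ⟨t21, t22⟩ := tight A2 B2 r2 f21 f22 e2
  have sol : ∀ y : ℝ × ℝ, A1 * y.1 + B1 * y.2 = r1 → A2 * y.1 + B2 * y.2 = r2 → y = x := by
    intro y g1 g2
    have d1 : A1 * (y.1 - x.1) + B1 * (y.2 - x.2) = 0 := by linear_combination g1 - e1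
    have d2 : A2 * (y.1 - x.1) + B2 * (y.2 - x.2) = 0 := by linear_combination g2 - e2
    have k1 : (A1 * B2 - A2 * B1) * (y.1 - x.1) = 0 := by linear_combination B2 * d1 - B1 * d2
    have k2 : (A1 * B2 - A2 * B1) * (y.2 - x.2) = 0 := by linear_combination A1 * d2 - A2 * d1
    have e1' : y.1 = x.1 := by
      rcases mul_eq_zero.mp k1 with h | h
      · exact absurd h hdet
      · linarith
    have e2' : y.2 = x.2 := by
      rcases mul_eq_zero.mp k2 with h | h
      · exact absurd h hdet
      · linarith
    exact Prod.ext e1' e2'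
  exact sol x1 t11 t21

/-- The pentagon with vertices `(-1,2)`, `(1,2)`, `(1,0)`, `(-1,-1)`, `(-2,-1)` is an
LDP-polygon of index `10`. -/
theorem stmt7 (P : Set (ℝ × ℝ))
    (hP : P = convexHull ℝ
      {((-1 : ℝ), (2 : ℝ)), ((1 : ℝ), (2 : ℝ)), ((1 : ℝ), (0 : ℝ)),
        ((-1 : ℝ), (-1 : ℝ)), ((-2 : ℝ), (-1 : ℝ))}) :
    (0 : ℝ × ℝ) ∈ interior P ∧
    (∀ p ∈ Set.extremePoints ℝ P, ∃ v : ℤ × ℤ, Int.gcd v.1 v.2 = 1 ∧ p = i2r v) ∧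
    IsLeast {ℓ : ℕ | 0 < ℓ ∧ Set.extremePoints ℝ ((ℓ : ℝ) • dualPoly P) ⊆ latticePts}
      10 := by
  have hPV : P = convexHull ℝ PV := hP
  subst hPV
  refine ⟨?_, ?_, ?_⟩
  · -- 0 ∈ interior
    rw [mem_interior]
    refine ⟨Metric.ball 0 (1/4), ?_, Metric.isOpen_ball, Metric.mem_ball_self (by norm_num)⟩
    intro v hv
    rw [Metric.mem_ball, dist_zero_right] at hv
    have h1 : |v.1| ≤ 1/4 := le_trans (by rw [← Real.norm_eq_abs]; exact norm_fst_le v) hv.le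
    have h2 : |v.2| ≤ 1/4 := le_trans (by rw [← Real.norm_eq_abs]; exact norm_snd_le v) hv.le
    exact P_ball h1 h2
  · -- extreme points are primitive lattice points
    intro p hp
    have hpv : p ∈ PV := extremePoints_convexHull_subset hp
    simp only [PV, Set.mem_insert_iff, Set.mem_singleton_iff] at hpv
    rcases hpv with rfl | rfl | rfl | rfl | rfl
    · exact ⟨(-1, 2), by decide, by norm_num [i2r, Prod.ext_iff]⟩
    · exact ⟨(1, 2), by decide, by norm_num [i2r, Prod.ext_iff]⟩
    · exact ⟨(1, 0), by decide, by norm_num [i2r, Prod.ext_iff]⟩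
    · exact ⟨(-1, -1), by decide, by norm_num [i2r, Prod.ext_iff]⟩
    · exact ⟨(-2, -1), by decide, by norm_num [i2r, Prod.ext_iff]⟩
  · constructor
    · -- 10 is in the set
      refine ⟨by norm_num, ?_⟩
      rw [Q_eq]
      intro p hp
      rw [show ((10:ℕ):ℝ) = (10:ℝ) by norm_num, ← convexHull_smul] at hp
      have := extremePoints_convexHull_subset hp
      rcases Set.mem_smul_set.mp this with ⟨q, hq, rfl⟩
      simp only [QV, Set.mem_insert_iff, Set.mem_singleton_iff] at hq
      rcases hq with rfl | rfl | rfl | rfl | rfl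
      · exact ⟨(6, -2), by simp only [i2r, Prod.smul_mk, smul_eq_mul]; norm_num [Prod.ext_iff]⟩
      · exact ⟨(0, 10), by simp only [i2r, Prod.smul_mk, smul_eq_mul]; norm_num [Prod.ext_iff]⟩
      · exact ⟨(-10, 20), by simp only [i2r, Prod.smul_mk, smul_eq_mul]; norm_num [Prod.ext_iff]⟩
      · exact ⟨(-10, 0), by simp only [i2r, Prod.smul_mk, smul_eq_mul]; norm_num [Prod.ext_iff]⟩
      · exact ⟨(0, -5), by simp only [i2r, Prod.smul_mk, smul_eq_mul]; norm_num [Prod.ext_iff]⟩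
    · -- lower bound
      rintro ℓ ⟨hl, hsub⟩
      have hlr : (0:ℝ) < (ℓ:ℝ) := by exact_mod_cast hl
      -- generic bound lemma
      have hbound : ∀ (u : ℝ × ℝ), u ∈ PV → ∀ y ∈ (ℓ:ℝ) • dualPoly (convexHull ℝ PV),
          u.1 * y.1 + u.2 * y.2 ≥ -(ℓ:ℝ) := by
        rintro u hu y ⟨z, hz, rfl⟩
        have h := hz u (mem_PV_hull hu)
        simp only [Prod.smul_fst, Prod.smul_snd, smul_eq_mul]
        nlinarith [mul_le_mul_of_nonneg_left h hlr.le]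
      -- first extreme point: (0, -ℓ/2)
      have hm1 : ((0:ℝ), -(ℓ:ℝ)/2) ∈ (ℓ:ℝ) • dualPoly (convexHull ℝ PV) := by
        refine ⟨((0:ℝ), (-1/2:ℝ)), ?_, ?_⟩
        · rw [Q_eq]; exact subset_convexHull ℝ QV (by norm_num [QV])
        · simp only [Prod.smul_mk, smul_eq_mul, Prod.ext_iff]; constructor <;> ring
      have hext1 : ((0:ℝ), -(ℓ:ℝ)/2) ∈
          Set.extremePoints ℝ ((ℓ:ℝ) • dualPoly (convexHull ℝ PV)) := by
        refine extreme_of_tight hm1 (A1 := -1) (B1 := 2) (r1 := -(ℓ:ℝ))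
          (A2 := 1) (B2 := 2) (r2 := -(ℓ:ℝ)) ?_ ?_ (by ring) (by ring) (by norm_num)
        · intro y hy
          have h := hbound ((-1:ℝ),(2:ℝ)) (by norm_num [PV]) y hy
          norm_num at h ⊢
          linarith
        · intro y hy
          have h := hbound ((1:ℝ),(2:ℝ)) (by norm_num [PV]) y hy
          norm_num at h ⊢
          linarith
      -- second extreme point: (3ℓ/5, -ℓ/5)
      have hm2 : ((3*(ℓ:ℝ)/5), -(ℓ:ℝ)/5) ∈ (ℓ:ℝ) • dualPoly (convexHull ℝ PV) := by
        refine ⟨((3/5:ℝ), (-1/5:ℝ)), ?_, ?_⟩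
        · rw [Q_eq]; exact subset_convexHull ℝ QV (by norm_num [QV])
        · simp only [Prod.smul_mk, smul_eq_mul, Prod.ext_iff]; constructor <;> ring
      have hext2 : ((3*(ℓ:ℝ)/5), -(ℓ:ℝ)/5) ∈
          Set.extremePoints ℝ ((ℓ:ℝ) • dualPoly (convexHull ℝ PV)) := by
        refine extreme_of_tight hm2 (A1 := -2) (B1 := -1) (r1 := -(ℓ:ℝ))
          (A2 := -1) (B2 := 2) (r2 := -(ℓ:ℝ)) ?_ ?_ (by ring) (by ring) (by norm_num)
        · intro y hy
          have h := hbound ((-2:ℝ),(-1:ℝ)) (by norm_num [PV]) y hy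
          norm_num at h ⊢
          linarith
        · intro y hy
          have h := hbound ((-1:ℝ),(2:ℝ)) (by norm_num [PV]) y hy
          norm_num at h ⊢
          linarith
      -- conclude divisibilities
      obtain ⟨m1, hm1'⟩ := hsub hext1
      obtain ⟨m2, hm2'⟩ := hsub hext2
      have hv1 : ((m1.2 : ℝ)) = -(ℓ:ℝ)/2 := by simpa [i2r] using congrArg Prod.snd hm1'
      have hv2 : ((m2.1 : ℝ)) = 3*(ℓ:ℝ)/5 := by simpa [i2r] using congrArg Prod.fst hm2'
      have hz1 : (2 * m1.2 : ℤ) = -(ℓ:ℤ) := by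
        have : (2 * (m1.2:ℝ)) = -(ℓ:ℝ) := by linarith
        exact_mod_cast this
      have hz2 : (5 * m2.1 : ℤ) = 3*(ℓ:ℤ) := by
        have : (5 * (m2.1:ℝ)) = 3*(ℓ:ℝ) := by linarith
        exact_mod_cast this
      have hd2 : 2 ∣ ℓ := by
        have : ((2:ℕ):ℤ) ∣ (ℓ:ℤ) := ⟨-m1.2, by push_cast; linarith⟩
        exact_mod_cast this
      have hd5 : 5 ∣ ℓ := by
        have h5 : ((5:ℕ):ℤ) ∣ ((3*ℓ:ℕ):ℤ) := ⟨m2.1, by push_cast; linarith⟩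
        have h5' : 5 ∣ 3*ℓ := by exact_mod_cast h5
        exact (Nat.Coprime.dvd_of_dvd_mul_left (by norm_num) h5')
      have hd10 : 10 ∣ ℓ := by
        have := Nat.Coprime.mul_dvd_of_dvd_of_dvd (show Nat.Coprime 2 5 by norm_num) hd2 hd5
        simpa using this
      exact Nat.le_of_dvd hl hd10
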